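/- Let r, λ > 0 and k a positive integer. The function F(x) = -∑_{j=0}^{k-1} [Γ(r+k) / ((k-j) λ^{j+1} Γ(r+k-j))] x^{k-j} + [Γ(r+k)/(λ^k Γ(r))] ∑_{j=0}^{k-1} 1/(λ(k-j)) satisfies x F''(x) + (r - λx) F'(x) = x^k - Γ(r+k)/(λ^k Γ(r)) for all x > 0. -/

import Mathlib

open Real Finset

private lemma aux_cancel (G P Q y l : ℝ) (hy : y ≠ 0) (hP : P ≠ 0) (hQ : Q ≠ 0) (hl : l ≠ 0) :
    y * (G / (P * (y * Q))) = l * (G / (P * l * Q)) := by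
  field_simp

private lemma aux_cancel2 (G P Q y : ℝ) (hy : y ≠ 0) (hP : P ≠ 0) (hQ : Q ≠ 0) :
    y * (G / (P * (y * Q))) = G / (P * Q) := by
  field_simp

/-- The explicit polynomial solves the Gamma(r, λ) Stein equation
`x F''(x) + (r - λx) F'(x) = x^k - Γ(r+k)/(λ^k Γ(r))` on `(0, ∞)`. -/
theorem stmt_5 (r lam : ℝ) (hr : 0 < r) (hlam : 0 < lam) (k : ℕ) (hk : 0 < k)
    (F : ℝ → ℝ)
    (hF : ∀ x : ℝ, F x =
      -∑ j ∈ Finset.range k,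
          (Real.Gamma (r + k) / (((k : ℝ) - j) * lam ^ (j + 1) * Real.Gamma (r + k - j)))
            * x ^ (k - j)
        + (Real.Gamma (r + k) / (lam ^ k * Real.Gamma r))
            * ∑ j ∈ Finset.range k, 1 / (lam * ((k : ℝ) - j))) :
    ∀ x : ℝ, 0 < x →
      x * deriv (deriv F) x + (r - lam * x) * deriv F x
        = x ^ k - Real.Gamma (r + k) / (lam ^ k * Real.Gamma r) := by
  set c : ℕ → ℝ := fun j =>
    Real.Gamma (r + k) / (((k : ℝ) - j) * lam ^ (j + 1) * Real.Gamma (r + (k : ℝ) - j)) with hc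
  set C : ℝ := (Real.Gamma (r + k) / (lam ^ k * Real.Gamma r))
      * ∑ j ∈ Finset.range k, 1 / (lam * ((k : ℝ) - j)) with hC
  have hFeq : F = fun x => -∑ j ∈ Finset.range k, c j * x ^ (k - j) + C := funext hF
  have h1 : ∀ x : ℝ, HasDerivAt F
      (-∑ j ∈ Finset.range k, c j * (((k - j : ℕ) : ℝ) * x ^ (k - j - 1))) x := by
    intro x
    rw [hFeq]
    exact ((HasDerivAt.fun_sum fun j _ =>
      (hasDerivAt_pow (k - j) x).const_mul (c j)).fun_neg).add_const C
  have hd1 : deriv F = fun x =>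
      -∑ j ∈ Finset.range k, c j * (((k - j : ℕ) : ℝ) * x ^ (k - j - 1)) :=
    funext fun x => (h1 x).deriv
  have h2 : ∀ x : ℝ, HasDerivAt (deriv F)
      (-∑ j ∈ Finset.range k,
        c j * (((k - j : ℕ) : ℝ) * (((k - j - 1 : ℕ) : ℝ) * x ^ (k - j - 1 - 1)))) x := by
    intro x
    rw [hd1]
    exact (HasDerivAt.fun_sum fun j _ =>
      (((hasDerivAt_pow (k - j - 1) x).const_mul (((k - j : ℕ) : ℝ))).const_mul (c j))).fun_neg
  set d : ℕ → ℝ := fun j => Real.Gamma (r + k) / (lam ^ (j + 1) * Real.Gamma (r + (k : ℝ) - j))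
    with hd
  have hΓpos : ∀ j : ℕ, j ≤ k → 0 < Real.Gamma (r + (k : ℝ) - j) := by
    intro j hj
    apply Real.Gamma_pos_of_pos
    have : (j : ℝ) ≤ (k : ℝ) := by exact_mod_cast hj
    linarith
  have hcd : ∀ j : ℕ, j < k → c j * (((k - j : ℕ) : ℝ)) = d j := by
    intro j hj
    have hkj : ((k - j : ℕ) : ℝ) = (k : ℝ) - j := by
      push_cast [Nat.cast_sub hj.le]; ring
    have hne : ((k : ℝ) - j) ≠ 0 := by
      have : (j : ℝ) < (k : ℝ) := by exact_mod_cast hj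
      linarith
    have hΓne := (hΓpos j hj.le).ne'
    rw [hc, hd, hkj]
    field_simp
  intro x hx
  rw [(h2 x).deriv, hd1]
  simp only []
  obtain ⟨n, rfl⟩ : ∃ n, k = n + 1 := ⟨k - 1, by omega⟩
  rw [mul_neg, mul_neg, ← neg_add, neg_eq_iff_eq_neg, Finset.mul_sum, Finset.mul_sum,
    ← Finset.sum_add_distrib]
  have hstep : ∀ j ∈ Finset.range (n + 1),
      (x * (c j * (((n + 1 - j : ℕ) : ℝ) *
            (((n + 1 - j - 1 : ℕ) : ℝ) * x ^ (n + 1 - j - 1 - 1))))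
        + (r - lam * x) * (c j * (((n + 1 - j : ℕ) : ℝ) * x ^ (n + 1 - j - 1))))
      = (r + ((n + 1 - j - 1 : ℕ) : ℝ)) * d j * x ^ (n + 1 - j - 1)
        - lam * d j * x ^ (n + 1 - j) := by
    intro j hj
    rw [Finset.mem_range] at hj
    have e1 : x ^ (n + 1 - j) = x * x ^ (n + 1 - j - 1) := by
      rw [← pow_succ']
      congr 1
      omega
    rcases Nat.lt_or_ge (j + 1) (n + 1) with h | h
    · have e2 : x ^ (n + 1 - j - 1) = x * x ^ (n + 1 - j - 1 - 1) := by
        rw [← pow_succ']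
        congr 1
        omega
      rw [← hcd j hj]
      rw [e1, e2]
      ring
    · rw [← hcd j (by omega), show n + 1 - j = 1 from by omega]
      norm_num
      ring
  rw [Finset.sum_congr rfl hstep, Finset.sum_sub_distrib]
  have hB : ∑ j ∈ Finset.range (n + 1), lam * d j * x ^ (n + 1 - j)
      = x ^ (n + 1) + ∑ i ∈ Finset.range n, lam * d (i + 1) * x ^ (n - i) := by
    rw [Finset.sum_range_succ']
    have hd0 : lam * d 0 = 1 := by
      rw [hd]
      simp only [Nat.cast_zero, sub_zero, pow_one]
      have hne := (Real.Gamma_pos_of_pos (show (0:ℝ) < r + ((n+1:ℕ):ℝ) by positivity)).ne'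
      field_simp
      ring
    rw [Nat.sub_zero, hd0, one_mul, add_comm]
    congr 1
    apply Finset.sum_congr rfl
    intro i _
    congr 2
    omega
  have hA : ∑ j ∈ Finset.range (n + 1),
      (r + ((n + 1 - j - 1 : ℕ) : ℝ)) * d j * x ^ (n + 1 - j - 1)
      = (∑ i ∈ Finset.range n, lam * d (i + 1) * x ^ (n - i))
        + Real.Gamma (r + (n + 1 : ℕ)) / (lam ^ (n + 1) * Real.Gamma r) := by
    rw [Finset.sum_range_succ]
    congr 1
    · apply Finset.sum_congr rfl
      intro i hi
      rw [Finset.mem_range] at hi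
      have key : (r + ((n + 1 - i - 1 : ℕ) : ℝ)) * d i = lam * d (i + 1) := by
        have hcast : ((n + 1 - i - 1 : ℕ) : ℝ) = (n : ℝ) - i := by
          have : (n + 1 - i - 1 : ℕ) = n - i := by omega
          rw [this, Nat.cast_sub hi.le]
        have harg : r + ((n + 1 : ℕ) : ℝ) - (i : ℝ)
            = (r + ((n + 1 : ℕ) : ℝ) - ((i + 1 : ℕ) : ℝ)) + 1 := by
          push_cast; ring
        have hy : r + ((n + 1 : ℕ) : ℝ) - ((i + 1 : ℕ) : ℝ) ≠ 0 := by
          have hi1 : ((i + 1 : ℕ) : ℝ) ≤ ((n + 1 : ℕ) : ℝ) := by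
            exact_mod_cast Nat.succ_le_succ hi.le
          linarith
        have hΓrec : Real.Gamma (r + ((n + 1 : ℕ) : ℝ) - (i : ℝ))
            = (r + ((n + 1 : ℕ) : ℝ) - ((i + 1 : ℕ) : ℝ))
              * Real.Gamma (r + ((n + 1 : ℕ) : ℝ) - ((i + 1 : ℕ) : ℝ)) := by
          rw [harg, Real.Gamma_add_one hy]
        have hΓne2 := (hΓpos (i + 1) (by omega)).ne'
        have hcoef : r + ((n + 1 - i - 1 : ℕ) : ℝ)
            = r + ((n + 1 : ℕ) : ℝ) - ((i + 1 : ℕ) : ℝ) := by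
          rw [hcast]; push_cast; ring
        rw [hd]
        simp only []
        rw [hcoef, hΓrec, show lam ^ (i + 1 + 1) = lam ^ (i + 1) * lam from pow_succ _ _]
        exact aux_cancel _ _ _ _ _ hy (by positivity) hΓne2 hlam.ne'
      rw [key]
      congr 2
      omega
    · have e0 : (n + 1 - n - 1 : ℕ) = 0 := by omega
      rw [e0]
      have hdn : r * d n = Real.Gamma (r + (n + 1 : ℕ)) / (lam ^ (n + 1) * Real.Gamma r) := by
        rw [hd]
        simp only []
        have harg : r + ((n + 1 : ℕ) : ℝ) - (n : ℝ) = r + 1 := by push_cast; ring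
        rw [harg, Real.Gamma_add_one hr.ne']
        exact aux_cancel2 _ _ _ _ hr.ne' (by positivity) (Real.Gamma_pos_of_pos hr).ne'
      rw [pow_zero]
      simp only [Nat.cast_zero, add_zero, mul_one]
      exact hdn
  rw [hA, hB]
  ring
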